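/- Let p_s, p_d ∈ (0, 1] with p_d − p_s + p_s·p_d ≥ 0, let λ ∈ [0, 1], set α* = (p_d − p_s + p_s·p_d)/(2·p_s·p_d) and γ = (1 + p_s)·p_d·(1 − λ)/((1 + p_s)·p_d − λ·(p_s·p_d + p_d − p_s)), and define F₁(x) = 1 + (1 − p_s)·p_d/((1 + p_s)·p_d − 2·x·p_s·p_d). Then F₁(λ·α*) = γ·F₁(0) + (1 − γ)·F₁(α*), where F₁(0) = 1 + (1 − p_s)/(1 + p_s) and F₁(α*) = 1 + (1 − p_s)·p_d/p_s. -/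

import Mathlib

/-- Convex-combination identity for the own-queue factor `F₁`: with
`F₁(x) = 1 + (1 − p_s) p_d / ((1 + p_s) p_d − 2 x p_s p_d)`,
`α* = (p_d − p_s + p_s p_d)/(2 p_s p_d)` and
`γ = (1 + p_s) p_d (1 − λ)/((1 + p_s) p_d − λ(p_s p_d + p_d − p_s))`, one has
`F₁(λ α*) = γ F₁(0) + (1 − γ) F₁(α*)`, where `F₁(0) = 1 + (1 − p_s)/(1 + p_s)` and
`F₁(α*) = 1 + (1 − p_s) p_d / p_s`. -/
theorem convex_combination_F1
    (ps pd : ℝ) (hps0 : 0 < ps) (hps1 : ps ≤ 1) (hpd0 : 0 < pd) (hpd1 : pd ≤ 1)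
    (hnum : 0 ≤ pd - ps + ps * pd)
    (lam : ℝ) (hlam0 : 0 ≤ lam) (hlam1 : lam ≤ 1)
    (αstar : ℝ) (hαstar : αstar = (pd - ps + ps * pd) / (2 * ps * pd))
    (γ : ℝ)
    (hγ : γ = (1 + ps) * pd * (1 - lam)
        / ((1 + ps) * pd - lam * (ps * pd + pd - ps)))
    (F1 : ℝ → ℝ)
    (hF1 : ∀ x, F1 x = 1 + (1 - ps) * pd / ((1 + ps) * pd - 2 * x * ps * pd)) :
    F1 (lam * αstar) = γ * F1 0 + (1 - γ) * F1 αstar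
      ∧ F1 0 = 1 + (1 - ps) / (1 + ps)
      ∧ F1 αstar = 1 + (1 - ps) * pd / ps := by
  have hps : ps ≠ 0 := ne_of_gt hps0
  have hpd : pd ≠ 0 := ne_of_gt hpd0
  have h1ps : (1 : ℝ) + ps ≠ 0 := by nlinarith
  have hαs : lam * αstar = lam * (pd - ps + ps * pd) / (2 * ps * pd) := by
    rw [hαstar]; ring
  have hD : (1 + ps) * pd - lam * (ps * pd + pd - ps) > 0 := by
    have h1 : lam * (ps * pd + pd - ps) ≤ 1 * (ps * pd + pd - ps) := by
      apply mul_le_mul_of_nonneg_right hlam1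
      linarith
    nlinarith
  have hD' : (1 + ps) * pd - lam * (ps * pd + pd - ps) ≠ 0 := ne_of_gt hD
  have hF0 : F1 0 = 1 + (1 - ps) / (1 + ps) := by
    rw [hF1]; field_simp; ring_nf; field_simp; ring
  have hFa : F1 αstar = 1 + (1 - ps) * pd / ps := by
    rw [hF1, hαstar]
    have h2 : (1 + ps) * pd - 2 * ((pd - ps + ps * pd) / (2 * ps * pd)) * ps * pd = ps := by
      field_simp; ring
    rw [h2]
  refine ⟨?_, hF0, hFa⟩
  rw [hF1, hF0, hFa, hγ, hαstar]
  have h3 : (1 + ps) * pd - 2 * (lam * ((pd - ps + ps * pd) / (2 * ps * pd))) * ps * pd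
      = (1 + ps) * pd - lam * (ps * pd + pd - ps) := by
    field_simp; ring
  rw [h3]
  have hD'' : pd * (1 + ps) - lam * (pd * (ps + 1) - ps) ≠ 0 := by
    convert hD' using 1; ring
  field_simp
  ring
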